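/- For all positive integers m and n, the number (m+n) divides the product C(m+n-2, m-1) * C(n, m) * C(2n, n), where C denotes the binomial coefficient. -/

import Mathlib

theorem stmt_0 (m n : ℕ) (hm : 0 < m) (hn : 0 < n) :
    (m + n) ∣ (m + n - 2).choose (m - 1) * n.choose m * (2 * n).choose n := by
  by_cases hmn : m ≤ n
  · -- key divisibility: m ∣ C(m+n-1, m-1) * C(m+n-2, m-1)
    have e1 : (m + n - 1).choose m * m = (m + n - 1).choose (m - 1) * n := by
      have h := Nat.choose_succ_right_eq (m + n - 1) (m - 1)
      rw [show m - 1 + 1 = m by omega, show m + n - 1 - (m - 1) = n by omega] at h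
      exact h
    have e2 : (m + n - 2).choose m * m = (m + n - 2).choose (m - 1) * (n - 1) := by
      have h := Nat.choose_succ_right_eq (m + n - 2) (m - 1)
      rw [show m - 1 + 1 = m by omega, show m + n - 2 - (m - 1) = n - 1 by omega] at h
      exact h
    set X := (m + n - 1).choose (m - 1) * (m + n - 2).choose (m - 1) with hX
    have hd1 : m ∣ n * X := by
      refine ⟨(m + n - 1).choose m * (m + n - 2).choose (m - 1), ?_⟩
      calc n * X = ((m + n - 1).choose (m - 1) * n) * (m + n - 2).choose (m - 1) := by ring
        _ = ((m + n - 1).choose m * m) * (m + n - 2).choose (m - 1) := by rw [e1]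
        _ = m * ((m + n - 1).choose m * (m + n - 2).choose (m - 1)) := by ring
    have hd2 : m ∣ (n - 1) * X := by
      refine ⟨(m + n - 2).choose m * (m + n - 1).choose (m - 1), ?_⟩
      calc (n - 1) * X
          = ((m + n - 2).choose (m - 1) * (n - 1)) * (m + n - 1).choose (m - 1) := by ring
        _ = ((m + n - 2).choose m * m) * (m + n - 1).choose (m - 1) := by rw [e2]
        _ = m * ((m + n - 2).choose m * (m + n - 1).choose (m - 1)) := by ring
    have key : m ∣ X := by
      have h := Nat.dvd_sub hd1 hd2
      rwa [← Nat.sub_mul, show n - (n - 1) = 1 by omega, one_mul] at h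
    obtain ⟨x, hx⟩ := key
    -- id2 : m * C(m+n, m) = (m+n) * C(m+n-1, m-1)
    have id2 : (m + n).choose m * m = (m + n) * (m + n - 1).choose (m - 1) := by
      have h := Nat.add_one_mul_choose_eq (m + n - 1) (m - 1)
      rw [show m + n - 1 + 1 = m + n by omega, show m - 1 + 1 = m by omega] at h
      omega
    -- id1 : C(n,m) * C(2n,n) = C(2n, m+n) * C(m+n, m)
    have id1 : n.choose m * (2 * n).choose n = (2 * n).choose (m + n) * (m + n).choose m := by
      have h1 := Nat.choose_mul (n := 2 * n) hmn
      have h2 := Nat.choose_mul (n := 2 * n) (show m ≤ m + n by omega)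
      rw [show m + n - m = n by omega] at h2
      have hs : (2 * n - m).choose (2 * n - m - n) = (2 * n - m).choose n :=
        Nat.choose_symm (by omega)
      rw [show 2 * n - m - n = n - m by omega] at hs
      rw [hs] at h1
      rw [h2, ← h1]; ring
    refine ⟨x * (2 * n).choose (m + n), ?_⟩
    have hmpos : m ≠ 0 := by omega
    apply Nat.eq_of_mul_eq_mul_left hm
    calc m * ((m + n - 2).choose (m - 1) * n.choose m * (2 * n).choose n)
        = (m + n - 2).choose (m - 1) * (n.choose m * (2 * n).choose n) * m := by ring
      _ = (m + n - 2).choose (m - 1) * ((2 * n).choose (m + n) * (m + n).choose m) * m := by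
          rw [id1]
      _ = (m + n - 2).choose (m - 1) * (2 * n).choose (m + n) * ((m + n).choose m * m) := by
          ring
      _ = (m + n - 2).choose (m - 1) * (2 * n).choose (m + n) *
            ((m + n) * (m + n - 1).choose (m - 1)) := by rw [id2]
      _ = (m + n) * (X * (2 * n).choose (m + n)) := by rw [hX]; ring
      _ = (m + n) * (m * x * (2 * n).choose (m + n)) := by rw [← hx]
      _ = m * ((m + n) * (x * (2 * n).choose (m + n))) := by ring
  · rw [Nat.choose_eq_zero_of_lt (by omega : n < m)]
    simp
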